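/- Every nontrivial element of H acts on Y as a loxodromic isometry: for every g ∈ H with g ≠ 1 there exist λ ≥ 1 and c ≥ 0 such that for all integers m, n one has |m − n|/λ − c ≤ d_Y(g^m, g^n) ≤ λ·|m − n| + c; that is, the map ℤ → (F, d_Y), n ↦ g^n, is a quasi-isometric embedding. -/

import Mathlib

open FreeGroup Filter List

namespace PurelyLox

abbrev F : Type := FreeGroup (Fin 3)

def a : F := FreeGroup.of 0
def b : F := FreeGroup.of 1
def c : F := FreeGroup.of 2

/-- The subgroup generated by `a` and `b`. -/
def H : Subgroup F := Subgroup.closure {a, b}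

/-- `g` is a positive word in the generators `a` and `b`. -/
def PosAB (g : F) : Prop :=
  ∀ x ∈ g.toWord, x.2 = true ∧ x.1 ≠ 2

/-- A word is 7-aperiodic: it contains no subword `u^7` with `u` nonempty. -/
def Aperiodic7 {β : Type*} (w : List β) : Prop :=
  ¬ ∃ u : List β, u ≠ [] ∧ (List.flatten (List.replicate 7 u)) <:+: w

/-- The data of the fixed sequence `(v n)` of positive 7-aperiodic words in `a,b`,
with pairwise distinct lengths tending to infinity. -/
structure VSeq where
  v : ℕ → F
  pos : ∀ n, PosAB (v n)
  len_ne : ∀ m n, m ≠ n → ((v m).toWord.length ≠ (v n).toWord.length)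
  len_tendsto : Tendsto (fun n => (v n).toWord.length) atTop atTop
  aperiodic : ∀ n, Aperiodic7 (v n).toWord

/-- `w n = v n * c`. -/
def VSeq.w (V : VSeq) (n : ℕ) : F := V.v n * c

/-- `z` is a `W`-word: nontrivial, and its reduced word is a subword of
the reduced word of `(w n)^m` for some `n` and some `m ≠ 0`. -/
def VSeq.IsW (V : VSeq) (z : F) : Prop :=
  z ≠ 1 ∧ ∃ (n : ℕ) (m : ℤ), m ≠ 0 ∧ z.toWord <:+: ((V.w n) ^ m).toWord

/-- `|g|_Y`: the least `k` such that `g` is a product of `k` `W`-words. -/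
noncomputable def VSeq.normY (V : VSeq) (g : F) : ℕ :=
  sInf {k | ∃ l : List F, l.length = k ∧ (∀ z ∈ l, V.IsW z) ∧ l.prod = g}

/-- The vertex distance in the graph `Y`. -/
noncomputable def VSeq.dY (V : VSeq) (x y : F) : ℕ := V.normY (x⁻¹ * y)

/-- The product `u * v` is without cancellation. -/
def NoCancel (u v : F) : Prop := (u * v).toWord = u.toWord ++ v.toWord

/-- `p 0, p 1, …, p k` is a `d_Y`-geodesic from `x` to `y`. -/
def VSeq.IsGeodesic (V : VSeq) (x y : F) (k : ℕ) (p : ℕ → F) : Prop :=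
  p 0 = x ∧ p k = y ∧ (∀ i < k, V.dY (p i) (p (i + 1)) = 1) ∧ k = V.dY x y

/-- `g` is cyclically reduced. -/
def CyclicallyReduced (g : F) : Prop := (g * g).toWord = g.toWord ++ g.toWord

/-- `g` is root-free. -/
def RootFree (g : F) : Prop := ∀ (x : F) (s : ℤ), 2 ≤ |s| → g ≠ x ^ s




abbrev β : Type := Fin 3 × Bool

/-- Non-cancelling adjacency relation -/
def R (p q : β) : Prop := ¬(p.1 = q.1 ∧ p.2 = !q.2)

theorem reduce_eq_self_of_chain : ∀ {l : List β}, l.Chain' R → FreeGroup.reduce l = l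
  | [], _ => rfl
  | p :: l, h => by
    have h1 : l.Chain' R := h.tail
    have ih := reduce_eq_self_of_chain h1
    rw [FreeGroup.reduce.cons, ih]
    cases l with
    | nil => rfl
    | cons q l' =>
      have hR : R p q := (List.isChain_cons_cons.1 h).1
      simp only [R] at hR
      simp [hR]

theorem exists_cancel_of_not_chain : ∀ {l : List β}, ¬ l.Chain' R →
    ∃ (L₂ L₃ : List β) (x : Fin 3) (b : Bool), l = L₂ ++ (x, b) :: (x, !b) :: L₃
  | [], h => absurd List.isChain_nil h
  | [p], h => absurd (List.isChain_singleton p) h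
  | p :: q :: l, h => by
    simp only [List.Chain', List.isChain_cons_cons] at h
    push_neg at h
    by_cases hpq : R p q
    · obtain ⟨L₂, L₃, x, b, hl⟩ := exists_cancel_of_not_chain (h hpq)
      exact ⟨p :: L₂, L₃, x, b, by rw [hl]; rfl⟩
    · simp only [R, not_not] at hpq
      refine ⟨[], l, p.1, p.2, ?_⟩
      have : q = (p.1, !p.2) := by
        obtain ⟨h1, h2⟩ := hpq
        have : q.2 = !p.2 := by cases hq : q.2 <;> cases hp : p.2 <;> simp_all
        calc q = (q.1, q.2) := rfl
        _ = (p.1, !p.2) := by rw [h1, this]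
      rw [this]; rfl

theorem chain_of_reduce_eq_self {l : List β} (h : FreeGroup.reduce l = l) : l.Chain' R := by
  by_contra hc
  obtain ⟨L₂, L₃, x, b, hl⟩ := exists_cancel_of_not_chain hc
  exact FreeGroup.reduce.not (by rw [h, hl])

theorem chain_toWord (g : FreeGroup (Fin 3)) : g.toWord.Chain' R :=
  chain_of_reduce_eq_self g.reduce_toWord

/-- Key splitting lemma: reduction of a concatenation of two reduced words. -/
theorem reduce_append : ∀ {x : List β}, x.Chain' R → ∀ {y : List β}, y.Chain' R →
    ∃ x₁ y₁ : List β, x₁ <+: x ∧ y₁ <:+ y ∧ FreeGroup.reduce (x ++ y) = x₁ ++ y₁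
  | [], _, y, hy => ⟨[], y, List.prefix_rfl, List.suffix_rfl, by
      simpa using reduce_eq_self_of_chain hy⟩
  | p :: x', hx, y, hy => by
    obtain ⟨x₁, y₁, hpre, hsuf, heq⟩ := reduce_append hx.tail hy
    simp only [List.tail_cons] at hpre heq
    rw [List.cons_append, FreeGroup.reduce.cons, heq]
    cases hx1 : x₁ with
    | cons q x₁' =>
      have hq : ∃ t, x' = q :: t := by
        rw [hx1] at hpre
        obtain ⟨t, ht⟩ := hpre
        exact ⟨x₁' ++ t, by rw [← ht]; rfl⟩
      obtain ⟨t, ht⟩ := hq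
      have hR : R p q := by
        rw [ht] at hx
        exact (List.isChain_cons_cons.1 hx).1
      simp only [R] at hR
      refine ⟨p :: q :: x₁', y₁, ?_, hsuf, ?_⟩
      · rw [hx1] at hpre
        obtain ⟨t', ht'⟩ := hpre
        exact ⟨t', by rw [← ht']; rfl⟩
      · simp [hR]
    | nil =>
      cases hy1 : y₁ with
      | nil => exact ⟨[p], [], ⟨x', rfl⟩, List.nil_suffix, rfl⟩
      | cons r y₁' =>
        by_cases hc : p.1 = r.1 ∧ p.2 = !r.2
        · refine ⟨[], y₁', List.nil_prefix, ?_, ?_⟩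
          · rw [hy1] at hsuf
            exact (List.suffix_cons r y₁').trans hsuf
          · simp [hc.1, hc.2]
        · refine ⟨[p], r :: y₁', ⟨x', rfl⟩, by rw [← hy1]; exact hsuf, ?_⟩
          simp [hc]

theorem toWord_mul_split (u v : FreeGroup (Fin 3)) :
    ∃ x₁ y₁ : List β, x₁ <+: u.toWord ∧ y₁ <:+ v.toWord ∧ (u * v).toWord = x₁ ++ y₁ := by
  obtain ⟨x₁, y₁, h1, h2, h3⟩ := reduce_append (chain_toWord u) (chain_toWord v)
  refine ⟨x₁, y₁, h1, h2, ?_⟩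
  conv_lhs => rw [← FreeGroup.mk_toWord (x := u), ← FreeGroup.mk_toWord (x := v)]
  rw [FreeGroup.mul_mk, FreeGroup.toWord_mk, h3]


/-! ### Counting occurrences of a pattern -/

/-- Number of occurrences of `t` as an infix of `w`, counted by starting position. -/
def cnt (t w : List β) : ℕ := ((Finset.range w.length).filter (fun i => t <+: w.drop i)).card

theorem cnt_le_of_prefix {t x X : List β} (h : x <+: X) : cnt t x ≤ cnt t X := by
  apply Finset.card_le_card
  intro i hi
  simp only [Finset.mem_filter, Finset.mem_range] at hi ⊢
  exact ⟨lt_of_lt_of_le hi.1 h.length_le, hi.2.trans (h.drop i)⟩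

theorem cnt_le_of_suffix {t y Y : List β} (h : y <:+ Y) : cnt t y ≤ cnt t Y := by
  obtain ⟨s, rfl⟩ := h
  apply Finset.card_le_card_of_injOn (fun i => s.length + i)
  · intro i hi
    simp only [Finset.mem_coe, Finset.mem_filter, Finset.mem_range] at hi ⊢
    constructor
    · simp only [List.length_append]; omega
    · rw [List.drop_length_add_append]
      exact hi.2
  · intro i _ j _ hij
    simpa using hij

theorem prefix_of_prefix_append {t A B : List β} (h : t <+: A ++ B) (hlen : t.length ≤ A.length) :
    t <+: A := by
  have ht : t = (A ++ B).take t.length := List.prefix_iff_eq_take.1 h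
  rw [List.take_append, show t.length - A.length = 0 by omega,
    List.take_zero, List.append_nil] at ht
  rw [ht]
  exact List.take_prefix _ _

theorem cnt_append_le (t x y : List β) : cnt t (x ++ y) ≤ cnt t x + cnt t y + t.length := by
  have hsub : (Finset.range (x ++ y).length).filter (fun i => t <+: (x ++ y).drop i) ⊆
      ((Finset.range x.length).filter (fun i => t <+: x.drop i)) ∪
      (((Finset.range y.length).filter (fun i => t <+: y.drop i)).image (fun i => x.length + i)) ∪
      (Finset.Ico (x.length - t.length) x.length) := by
    intro i hi
    simp only [Finset.mem_filter, Finset.mem_range, List.length_append] at hi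
    obtain ⟨hilt, hpre⟩ := hi
    simp only [Finset.mem_union, Finset.mem_filter, Finset.mem_range, Finset.mem_image,
      Finset.mem_Ico]
    by_cases h1 : x.length ≤ i
    · refine Or.inl (Or.inr ⟨i - x.length, ⟨by omega, ?_⟩, by omega⟩)
      have hd : (x ++ y).drop i = y.drop (i - x.length) := by
        rw [List.drop_append, List.drop_eq_nil_of_le (by omega), List.nil_append]
      rwa [hd] at hpre
    · push_neg at h1
      by_cases h2 : i + t.length ≤ x.length
      · refine Or.inl (Or.inl ⟨h1, ?_⟩)
        have hd : (x ++ y).drop i = x.drop i ++ y := by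
          rw [List.drop_append]
          have : i - x.length = 0 := by omega
          rw [this, List.drop_zero]
        rw [hd] at hpre
        apply prefix_of_prefix_append hpre
        rw [List.length_drop]; omega
      · exact Or.inr ⟨by omega, h1⟩
  calc cnt t (x ++ y) ≤ _ := Finset.card_le_card hsub
  _ ≤ _ := by
    refine le_trans (Finset.card_union_le _ _) ?_
    have h1 := Finset.card_union_le
      ((Finset.range x.length).filter (fun i => t <+: x.drop i))
      (((Finset.range y.length).filter (fun i => t <+: y.drop i)).image (fun i => x.length + i))
    have h2 := Finset.card_image_le (s := (Finset.range y.length).filter (fun i => t <+: y.drop i))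
      (f := fun i => x.length + i)
    have h3 : (Finset.Ico (x.length - t.length) x.length).card ≤ t.length := by
      rw [Nat.card_Ico]; omega
    simp only [cnt]
    omega

theorem cnt_mul_le (t : List β) (u v : FreeGroup (Fin 3)) :
    cnt t (u * v).toWord ≤ cnt t u.toWord + cnt t v.toWord + t.length := by
  obtain ⟨x₁, y₁, h1, h2, h3⟩ := toWord_mul_split u v
  rw [h3]
  calc cnt t (x₁ ++ y₁) ≤ cnt t x₁ + cnt t y₁ + t.length := cnt_append_le t x₁ y₁
  _ ≤ _ := by
    have := cnt_le_of_prefix (t := t) h1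
    have := cnt_le_of_suffix (t := t) h2
    omega

theorem cnt_prod_le (t : List β) (l : List (FreeGroup (Fin 3)))
    (h : ∀ z ∈ l, cnt t z.toWord = 0) : cnt t l.prod.toWord ≤ l.length * t.length := by
  induction l with
  | nil => simp [cnt, FreeGroup.toWord_one]
  | cons z l ih =>
    rw [List.prod_cons]
    calc cnt t (z * l.prod).toWord ≤ cnt t z.toWord + cnt t l.prod.toWord + t.length :=
      cnt_mul_le t z l.prod
    _ ≤ 0 + l.length * t.length + t.length := by
      have h1 := h z List.mem_cons_self
      have h2 := ih (fun w hw => h w (List.mem_cons_of_mem z hw))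
      omega
    _ ≤ _ := by rw [List.length_cons]; ring_nf; omega


-- PART 3 --

theorem chain_of_pos {l : List β} (h : ∀ p ∈ l, p.2 = true) : l.Chain' R := by
  induction l with
  | nil => exact List.isChain_nil
  | cons p l ih =>
    cases l with
    | nil => exact List.isChain_singleton p
    | cons q l' =>
      refine List.isChain_cons_cons.2 ⟨?_, ih (fun r hr => h r (List.mem_cons_of_mem p hr))⟩
      intro ⟨_, h2⟩
      rw [h p (by simp), h q (by simp)] at h2
      simp at h2

theorem infix_of_marker {t A B : List β} {x₀ : β} (hx : x₀ ∉ t)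
    (h : t <:+: A ++ x₀ :: B) : t <:+: A ∨ t <:+: B := by
  obtain ⟨s, p, hsp⟩ := h
  have hsp' : s ++ (t ++ p) = A ++ x₀ :: B := by rw [← List.append_assoc]; exact hsp
  by_cases h1 : s.length + t.length ≤ A.length
  · left
    have hA : A = (A ++ x₀ :: B).take A.length := by
      rw [List.take_append, Nat.sub_self, List.take_zero, List.append_nil,
        List.take_of_length_le le_rfl]
    rw [← hsp', List.take_append,
      List.take_of_length_le (by omega), List.take_append,
      List.take_of_length_le (by omega)] at hA
    exact ⟨s, (p.take _), by rw [hA, List.append_assoc]⟩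
  · by_cases h2 : A.length + 1 ≤ s.length
    · right
      have hL : (s ++ (t ++ p)).drop (A.length + 1) = s.drop (A.length + 1) ++ (t ++ p) := by
        rw [List.drop_append, show A.length + 1 - s.length = 0 by omega,
          List.drop_zero]
      have hR : (A ++ x₀ :: B).drop (A.length + 1) = B := by
        rw [List.drop_append, List.drop_eq_nil_of_le (by omega),
          show A.length + 1 - A.length = 1 by omega, List.nil_append, List.drop_one,
          List.tail_cons]
      refine ⟨s.drop (A.length + 1), p, ?_⟩
      rw [List.append_assoc, ← hL, hsp', hR]
    · exfalso
      apply hx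
      push_neg at h1 h2
      have hlen : A.length < (s ++ (t ++ p)).length := by
        rw [hsp']; simp
      have h3 : (s ++ (t ++ p))[A.length]'hlen = x₀ := by
        simp only [hsp']
        rw [List.getElem_append_right le_rfl]
        simp
      rw [List.getElem_append_right (by omega)] at h3
      rw [List.getElem_append_left (by omega)] at h3
      rw [← h3]
      exact List.getElem_mem _

theorem infix_flatten_marker {t v : List β} {x₀ : β} (hx : x₀ ∉ t) :
    ∀ m : ℕ, t <:+: List.flatten (List.replicate m (v ++ [x₀])) → t = [] ∨ t <:+: v := by
  intro m
  induction m with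
  | zero => intro h; left; simpa using h
  | succ m ih =>
    intro h
    rw [List.replicate_succ, List.flatten_cons, List.append_assoc, List.singleton_append] at h
    rcases infix_of_marker hx h with h' | h'
    · exact Or.inr h'
    · exact ih h'

theorem mem_invRev {l : List β} {p : β} : p ∈ FreeGroup.invRev l ↔ (p.1, !p.2) ∈ l := by
  simp only [FreeGroup.invRev, List.mem_reverse, List.mem_map]
  constructor
  · rintro ⟨⟨x, b⟩, hq, rfl⟩
    simpa using hq
  · intro h
    exact ⟨(p.1, !p.2), h, by simp⟩

theorem invRev_append (l₁ l₂ : List β) :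
    FreeGroup.invRev (l₁ ++ l₂) = FreeGroup.invRev l₂ ++ FreeGroup.invRev l₁ := by
  simp [FreeGroup.invRev]

theorem invRev_infix {u w : List β} (h : u <:+: w) :
    FreeGroup.invRev u <:+: FreeGroup.invRev w := by
  obtain ⟨s, p, rfl⟩ := h
  rw [invRev_append, invRev_append]
  exact ⟨FreeGroup.invRev p, FreeGroup.invRev s, by rw [List.append_assoc]⟩

theorem invRev_flatten_replicate (k : ℕ) (u : List β) :
    FreeGroup.invRev (List.flatten (List.replicate k u)) =
      List.flatten (List.replicate k (FreeGroup.invRev u)) := by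
  induction k with
  | zero => simp [FreeGroup.invRev]
  | succ k ih =>
    rw [List.replicate_succ, List.flatten_cons, invRev_append, ih,
      List.replicate_succ' (n := k), List.flatten_append]
    simp

/-- The reduced word of `(w n)^m` for natural `m`. -/
theorem w_pow_toWord (V : VSeq) (n : ℕ) (m : ℕ) :
    ((V.w n) ^ m).toWord =
      List.flatten (List.replicate m ((V.v n).toWord ++ [((2 : Fin 3), true)])) := by
  have hvpos := V.pos n
  have hpos : ∀ p ∈ (V.v n).toWord ++ [((2 : Fin 3), true)], p.2 = true := by
    intro p hp
    rcases List.mem_append.1 hp with h | h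
    · exact (hvpos p h).1
    · simp at h; rw [h]
  have hw : V.w n = FreeGroup.mk ((V.v n).toWord ++ [((2 : Fin 3), true)]) := by
    rw [← FreeGroup.mul_mk, FreeGroup.mk_toWord]
    rfl
  rw [hw, FreeGroup.pow_mk, FreeGroup.toWord_mk]
  apply reduce_eq_self_of_chain
  apply chain_of_pos
  intro p hp
  rw [List.mem_flatten] at hp
  obtain ⟨l, hl, hpl⟩ := hp
  rw [List.eq_of_mem_replicate hl] at hpl
  exact hpos p hpl

/-- The key non-occurrence: `u^7` is never an infix of any `(w n)^m`. -/
theorem not_infix_w_zpow (V : VSeq) (u : List β) (hu : u ≠ [])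
    (hcf : ∀ p ∈ u, p.1 ≠ 2) (n : ℕ) (m : ℤ) (hm : m ≠ 0) :
    ¬ (List.flatten (List.replicate 7 u) <:+: ((V.w n) ^ m).toWord) := by
  intro hinf
  set t := List.flatten (List.replicate 7 u) with ht
  have htne : t ≠ [] := by
    rw [ht]
    intro h
    rw [List.flatten_eq_nil_iff] at h
    exact hu (h u (List.mem_replicate.2 ⟨by norm_num, rfl⟩))
  rcases lt_trichotomy m 0 with hneg | hzero | hposm
  · have hmeq : (V.w n) ^ m = ((V.w n) ^ (-m).toNat)⁻¹ := by
      rw [← zpow_natCast, Int.toNat_of_nonneg (by omega), ← zpow_neg, neg_neg]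
    rw [hmeq, FreeGroup.toWord_inv, w_pow_toWord] at hinf
    have h2 : FreeGroup.invRev t <:+:
        List.flatten (List.replicate (-m).toNat ((V.v n).toWord ++ [((2 : Fin 3), true)])) := by
      have := invRev_infix hinf
      rwa [FreeGroup.invRev_invRev] at this
    have hx : ((2 : Fin 3), true) ∉ FreeGroup.invRev t := by
      intro hmem
      have hmem2 := mem_invRev.1 hmem
      rw [ht, List.mem_flatten] at hmem2
      obtain ⟨l, hl, hpl⟩ := hmem2
      rw [List.eq_of_mem_replicate hl] at hpl
      exact (hcf _ hpl) rfl
    rcases infix_flatten_marker hx _ h2 with h' | h'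
    · apply htne
      apply List.eq_nil_of_length_eq_zero
      have := congrArg List.length h'
      rw [FreeGroup.invRev_length] at this
      simpa using this
    · rw [ht, invRev_flatten_replicate] at h'
      refine V.aperiodic n ⟨FreeGroup.invRev u, ?_, h'⟩
      intro h
      apply hu
      apply List.eq_nil_of_length_eq_zero
      have := congrArg List.length h
      rw [FreeGroup.invRev_length] at this
      simpa using this
  · exact hm hzero
  · have hmeq : (V.w n) ^ m = (V.w n) ^ m.toNat := by
      rw [← zpow_natCast, Int.toNat_of_nonneg (by omega)]
    rw [hmeq, w_pow_toWord] at hinf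
    have hx : ((2 : Fin 3), true) ∉ t := by
      intro hmem
      rw [ht, List.mem_flatten] at hmem
      obtain ⟨l, hl, hpl⟩ := hmem
      rw [List.eq_of_mem_replicate hl] at hpl
      exact (hcf _ hpl) rfl
    rcases infix_flatten_marker hx _ hinf with h' | h'
    · exact htne h'
    · exact V.aperiodic n ⟨u, hu, h'⟩


-- PART 4 --

theorem toWord_mul_eq_reduce (u v : FreeGroup (Fin 3)) :
    (u * v).toWord = FreeGroup.reduce (u.toWord ++ v.toWord) := by
  conv_lhs => rw [← FreeGroup.mk_toWord (x := u), ← FreeGroup.mk_toWord (x := v)]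
  rw [FreeGroup.mul_mk, FreeGroup.toWord_mk]

theorem exists_cycRed : ∀ (N : ℕ) (g : F), g.toWord.length = N → g ≠ 1 →
    ∃ x h : F, g = x * h * x⁻¹ ∧ h ≠ 1 ∧ CyclicallyReduced h ∧
      ∀ p ∈ h.toWord, p ∈ g.toWord := by
  intro N
  induction N using Nat.strong_induction_on with
  | _ N ih =>
    intro g hN hg
    by_cases hcr : CyclicallyReduced g
    · exact ⟨1, g, by group, hg, hcr, fun p hp => hp⟩
    · have hred : FreeGroup.reduce (g.toWord ++ g.toWord) ≠ g.toWord ++ g.toWord := by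
        intro h
        exact hcr ((toWord_mul_eq_reduce g g).trans h)
      have hnc : ¬ (g.toWord ++ g.toWord).Chain' R := fun h =>
        hred (reduce_eq_self_of_chain h)
      simp only [List.Chain', List.isChain_append] at hnc
      push_neg at hnc
      obtain ⟨p, hp, q, hq, hpq⟩ := hnc (chain_toWord g) (chain_toWord g)
      simp only [R, not_not] at hpq
      have hq2 : q = (p.1, !p.2) := by
        obtain ⟨h1, h2⟩ := hpq
        have hb : q.2 = !p.2 := by cases hbq : q.2 <;> cases hbp : p.2 <;> simp_all
        calc q = (q.1, q.2) := rfl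
        _ = (p.1, !p.2) := by rw [← h1, hb]
      have hne2 : g.toWord ≠ [] := by
        intro h; rw [h] at hq; simp at hq
      have hsplit : g.toWord.dropLast ++ [p] = g.toWord := by
        have h1 := List.dropLast_append_getLast hne2
        have h2 := List.getLast?_eq_getLast hne2
        rw [h2] at hp
        simp only [Option.mem_def, Option.some.injEq] at hp
        rw [hp] at h1
        exact h1
      cases hmid : g.toWord.dropLast with
      | nil =>
        exfalso
        have htw : g.toWord = [p] := by rw [← hsplit, hmid]; rfl
        rw [htw] at hq
        simp only [List.head?_cons, Option.mem_def, Option.some.injEq] at hq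
        rw [← hq] at hq2
        have := congrArg Prod.snd hq2
        simp at this
      | cons a mid =>
        have ha : a = q := by
          rw [← hsplit, hmid] at hq
          simp only [List.cons_append, List.head?_cons, Option.mem_def,
            Option.some.injEq] at hq
          exact hq
        have htw : g.toWord = q :: (mid ++ [p]) := by
          rw [← hsplit, hmid, ha]; rfl
        have hg' : g = FreeGroup.mk [q] * FreeGroup.mk mid * (FreeGroup.mk [q])⁻¹ := by
          have h1 : g = FreeGroup.mk (q :: (mid ++ [p])) := by
            rw [← FreeGroup.mk_toWord (x := g), htw]
          have h2 : (FreeGroup.mk [q] : F)⁻¹ = FreeGroup.mk [p] := by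
            rw [FreeGroup.inv_mk]
            congr 1
            rw [hq2]
            simp [FreeGroup.invRev]
          rw [h1, h2, FreeGroup.mul_mk, FreeGroup.mul_mk]
          rfl
        have hglen : (FreeGroup.mk mid : F).toWord.length < N := by
          rw [FreeGroup.toWord_mk]
          have h3 : (FreeGroup.reduce mid).length ≤ mid.length :=
            FreeGroup.Red.length_le FreeGroup.reduce.red
          have h4 : g.toWord.length = mid.length + 2 := by
            rw [htw]; simp
          omega
        have hne' : (FreeGroup.mk mid : F) ≠ 1 := by
          intro h
          rw [h] at hg'
          rw [mul_one] at hg'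
          exact hg (by rw [hg', mul_inv_cancel])
        obtain ⟨x, h, hx, hh1, hhcr, hlet⟩ :=
          ih (FreeGroup.mk mid : F).toWord.length hglen (FreeGroup.mk mid) rfl hne'
        refine ⟨FreeGroup.mk [q] * x, h, ?_, hh1, hhcr, ?_⟩
        · rw [hg', hx]; group
        · intro p' hp'
          have h5 : p' ∈ mid := by
            have h6 := hlet p' hp'
            rw [FreeGroup.toWord_mk] at h6
            exact (FreeGroup.reduce.red (L := mid)).sublist.subset h6
          rw [htw]
          simp [h5]

theorem head?_flatten_replicate (u : List β) :
    ∀ (N : ℕ) (q : β), q ∈ (List.flatten (List.replicate N u)).head? → q ∈ u.head?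
  | 0, q => by simp
  | N + 1, q => by
    rw [List.replicate_succ, List.flatten_cons, List.head?_append]
    intro hq
    cases hu : u with
    | nil =>
      rw [hu] at hq
      simp only [List.head?_nil, Option.none_or] at hq
      rw [← hu]
      exact head?_flatten_replicate u N q (by rw [hu]; exact hq)
    | cons r u' =>
      rw [hu] at hq
      have hor : (Option.some r).or ((List.replicate N (r :: u')).flatten).head? = some r := rfl
      rw [List.head?_cons, hor] at hq
      simpa using hq

theorem cycRed_pow_toWord {h : F} (hcr : CyclicallyReduced h) (N : ℕ) :
    (h ^ N).toWord = List.flatten (List.replicate N h.toWord) := by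
  have hred2 : FreeGroup.reduce (h.toWord ++ h.toWord) = h.toWord ++ h.toWord :=
    (toWord_mul_eq_reduce h h).symm.trans hcr
  have hchain2 := chain_of_reduce_eq_self hred2
  simp only [List.Chain', List.isChain_append] at hchain2
  obtain ⟨hc1, _, hseam⟩ := hchain2
  have hflat : ∀ M : ℕ, (List.flatten (List.replicate M h.toWord)).Chain' R := by
    intro M
    induction M with
    | zero => exact List.isChain_nil
    | succ M ihM =>
      rw [List.replicate_succ, List.flatten_cons]; simp only [List.Chain', List.isChain_append]
      exact ⟨hc1, ihM, fun x hx y hy => hseam x hx y (head?_flatten_replicate _ M y hy)⟩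
  conv_lhs => rw [← FreeGroup.mk_toWord (x := h)]
  rw [FreeGroup.pow_mk, FreeGroup.toWord_mk]
  exact reduce_eq_self_of_chain (hflat N)

theorem drop_flatten_replicate (u : List β) :
    ∀ (j N : ℕ), j ≤ N → (List.flatten (List.replicate N u)).drop (j * u.length) =
      List.flatten (List.replicate (N - j) u) := by
  intro j
  induction j with
  | zero => intro N _; simp
  | succ j ihj =>
    intro N hjN
    obtain ⟨M, rfl⟩ : ∃ M, N = M + 1 := ⟨N - 1, by omega⟩
    rw [List.replicate_succ, List.flatten_cons,
      show (j + 1) * u.length = u.length + j * u.length by ring, List.drop_length_add_append,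
      ihj M (by omega), show M + 1 - (j + 1) = M - j by omega]

theorem length_flatten_replicate (u : List β) (N : ℕ) :
    (List.flatten (List.replicate N u)).length = N * u.length := by
  rw [List.length_flatten, List.map_replicate, List.sum_replicate, smul_eq_mul]

theorem le_cnt_pow {h : F} (hcr : CyclicallyReduced h) (hne : h ≠ 1) (N : ℕ) :
    N ≤ cnt (List.flatten (List.replicate 7 h.toWord)) ((h ^ N).toWord) + 6 := by
  by_cases hN : N ≤ 6
  · omega
  push_neg at hN
  have hL : 1 ≤ h.toWord.length := by
    rcases Nat.eq_zero_or_pos h.toWord.length with h0 | h1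
    · exact absurd (FreeGroup.toWord_eq_nil_iff.1 (List.eq_nil_of_length_eq_zero h0)) hne
    · exact h1
  rw [cycRed_pow_toWord hcr]
  have hsub : N - 6 ≤ cnt (List.flatten (List.replicate 7 h.toWord))
      (List.flatten (List.replicate N h.toWord)) := by
    rw [cnt, ← Finset.card_range (N - 6)]
    apply Finset.card_le_card_of_injOn (fun j => j * h.toWord.length)
    · intro j hj
      rw [Finset.mem_coe, Finset.mem_range] at hj
      rw [Finset.mem_coe, Finset.mem_filter, Finset.mem_range, length_flatten_replicate]
      constructor
      · have : j < N := by omega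
        exact Nat.mul_lt_mul_of_lt_of_le this le_rfl hL
      · rw [drop_flatten_replicate _ j N (by omega)]
        have h7 : List.replicate (N - j) h.toWord =
            List.replicate 7 h.toWord ++ List.replicate (N - j - 7) h.toWord := by
          rw [← List.replicate_add, show 7 + (N - j - 7) = N - j by omega]
        rw [h7, List.flatten_append]
        exact ⟨_, rfl⟩
    · intro i _ j _ hij
      simp only at hij
      exact Nat.eq_of_mul_eq_mul_right hL hij
  omega


-- PART 5 --

theorem mem_H_letters {g : F} (hg : g ∈ H) : ∀ p ∈ g.toWord, p.1 ≠ 2 := by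
  let K : Subgroup F :=
    { carrier := {x : F | ∀ p ∈ x.toWord, p.1 ≠ 2}
      one_mem' := by
        intro p hp
        rw [FreeGroup.toWord_one] at hp
        simp at hp
      mul_mem' := by
        intro x y hx hy p hp
        have hmem := (FreeGroup.toWord_mul_sublist x y).subset hp
        rcases List.mem_append.1 hmem with hlr | hlr
        · exact hx p hlr
        · exact hy p hlr
      inv_mem' := by
        intro x hx p hp
        rw [FreeGroup.toWord_inv] at hp
        exact hx (p.1, !p.2) (mem_invRev.1 hp) }
  have hHK : H ≤ K := by
    rw [H, Subgroup.closure_le]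
    intro x hx
    simp only [Set.mem_insert_iff, Set.mem_singleton_iff] at hx
    rcases hx with rfl | rfl
    · intro p hp
      rw [a, FreeGroup.toWord_of] at hp
      simp only [List.mem_singleton] at hp
      rw [hp]
      decide
    · intro p hp
      rw [b, FreeGroup.toWord_of] at hp
      simp only [List.mem_singleton] at hp
      rw [hp]
      decide
  exact hHK hg

theorem forced_letter (V : VSeq) {n : ℕ} (hn : 7 ≤ (V.v n).toWord.length)
    {i j : Fin 3} (hij : i.val ≠ j.val) (hi2 : i.val ≠ 2) (hj2 : j.val ≠ 2) :
    (i, true) ∈ (V.v n).toWord := by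
  by_contra hmem
  have hall : ∀ p ∈ (V.v n).toWord, p = (j, true) := by
    intro p hp
    obtain ⟨hb, h2⟩ := V.pos n p hp
    have hval : p.1.val < 3 := p.1.isLt
    have h2v : p.1.val ≠ 2 := by
      intro hv
      exact h2 (Fin.ext (by simp [hv]))
    have hiv : p.1.val ≠ i.val := by
      intro hv
      apply hmem
      have : p.1 = i := Fin.ext hv
      rw [← this, ← hb]
      exact hp
    have hjv : p.1.val = j.val := by
      have hj3 : j.val < 3 := j.isLt
      have hi3 : i.val < 3 := i.isLt
      omega
    have : p.1 = j := Fin.ext hjv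
    rw [← this, ← hb]
  have hrep : (V.v n).toWord = List.replicate (V.v n).toWord.length ((j : Fin 3), true) :=
    List.eq_replicate_iff.2 ⟨rfl, hall⟩
  apply V.aperiodic n
  refine ⟨[((j : Fin 3), true)], by simp, ?_⟩
  have hfl : List.flatten (List.replicate 7 [((j : Fin 3), true)]) =
      List.replicate 7 ((j : Fin 3), true) := by
    induction' hk : (7 : ℕ) with k ihk
    · simp
    · simp [List.replicate_succ]
  rw [hfl, hrep]
  refine List.IsPrefix.isInfix ?_
  refine ⟨List.replicate ((V.v n).toWord.length - 7) ((j : Fin 3), true), ?_⟩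
  rw [← List.replicate_add, show 7 + ((V.v n).toWord.length - 7) = (V.v n).toWord.length by omega]

theorem isW_singleton (V : VSeq) (p : β) : V.IsW (FreeGroup.mk [p]) := by
  obtain ⟨n, hn⟩ := (V.len_tendsto.eventually_ge_atTop 7).exists
  have hw1 : ((V.w n) ^ (1 : ℤ)).toWord = (V.v n).toWord ++ [((2 : Fin 3), true)] := by
    rw [zpow_one, show V.w n = (V.w n) ^ (1 : ℕ) by rw [pow_one], w_pow_toWord]
    simp
  have hinf : ∀ x : Fin 3, [(x, true)] <:+: ((V.w n) ^ (1 : ℤ)).toWord := by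
    intro x
    rw [hw1]
    by_cases hx : x.val = 2
    · have : x = 2 := Fin.ext (by simp [hx])
      rw [this]
      exact ⟨(V.v n).toWord, [], by simp⟩
    · have hmem : (x, true) ∈ (V.v n).toWord := by
        rcases Nat.lt_or_ge x.val 1 with h0 | h1
        · have : x.val = 0 := by omega
          exact forced_letter V hn (i := x) (j := 1) (by simp [this]) (by simp [this]) (by simp)
        · have : x.val = 1 := by have := x.isLt; omega
          exact forced_letter V hn (i := x) (j := 0) (by simp [this]) (by simp [this]) (by simp)
      obtain ⟨s, tl, hst⟩ := List.append_of_mem hmem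
      have h4 : [(x, true)] <:+: (V.v n).toWord := ⟨s, tl, by simp [hst]⟩
      exact h4.trans (List.prefix_append _ _).isInfix
  constructor
  · intro h1
    have := congrArg FreeGroup.toWord h1
    rw [FreeGroup.toWord_mk, FreeGroup.reduce_singleton, FreeGroup.toWord_one] at this
    exact List.cons_ne_nil _ _ this
  · cases hb : p.2 with
    | true =>
      refine ⟨n, 1, one_ne_zero, ?_⟩
      rw [FreeGroup.toWord_mk, FreeGroup.reduce_singleton]
      have : p = (p.1, true) := by rw [← hb]
      rw [this]
      exact hinf p.1
    | false =>
      refine ⟨n, -1, by norm_num, ?_⟩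
      rw [FreeGroup.toWord_mk, FreeGroup.reduce_singleton]
      have h2 : (V.w n) ^ (-1 : ℤ) = ((V.w n) ^ (1 : ℤ))⁻¹ := by
        rw [zpow_neg]
      rw [h2, FreeGroup.toWord_inv]
      have h3 : [p] = FreeGroup.invRev [(p.1, true)] := by
        simp [FreeGroup.invRev]
        rw [← hb]
      rw [h3]
      exact invRev_infix (hinf p.1)

theorem exists_decomp (V : VSeq) (g : F) :
    ∃ l : List F, l.length = g.toWord.length ∧ (∀ z ∈ l, V.IsW z) ∧ l.prod = g := by
  refine ⟨g.toWord.map (fun p => FreeGroup.mk [p]), by simp, ?_, ?_⟩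
  · intro z hz
    rw [List.mem_map] at hz
    obtain ⟨p, _, rfl⟩ := hz
    exact isW_singleton V p
  · have hgen : ∀ L : List β, (L.map (fun p => FreeGroup.mk [p])).prod = FreeGroup.mk L := by
      intro L
      induction L with
      | nil => rw [List.map_nil, List.prod_nil, FreeGroup.one_eq_mk]
      | cons p L ih =>
        rw [List.map_cons, List.prod_cons, ih, FreeGroup.mul_mk]
        rfl
    rw [hgen, FreeGroup.mk_toWord]

theorem normY_spec (V : VSeq) (g : F) :
    ∃ l : List F, l.length = V.normY g ∧ (∀ z ∈ l, V.IsW z) ∧ l.prod = g := by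
  have hne : {k | ∃ l : List F, l.length = k ∧ (∀ z ∈ l, V.IsW z) ∧ l.prod = g}.Nonempty := by
    obtain ⟨l, h1, h2, h3⟩ := exists_decomp V g
    exact ⟨l.length, l, rfl, h2, h3⟩
  exact Nat.sInf_mem hne

theorem normY_le_length (V : VSeq) (g : F) : V.normY g ≤ g.toWord.length := by
  apply Nat.sInf_le
  obtain ⟨l, h1, h2, h3⟩ := exists_decomp V g
  exact ⟨l, h1, h2, h3⟩

theorem normY_inv_le (V : VSeq) (g : F) : V.normY g⁻¹ ≤ V.normY g := by
  obtain ⟨l, hlen, hW, hprod⟩ := normY_spec V g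
  apply Nat.sInf_le
  refine ⟨(l.map (fun z => z⁻¹)).reverse, by simp [hlen], ?_, ?_⟩
  · intro z hz
    simp only [List.mem_reverse, List.mem_map] at hz
    obtain ⟨w, hw, rfl⟩ := hz
    obtain ⟨hw1, n, m, hm, hinf⟩ := hW w hw
    refine ⟨inv_ne_one.2 hw1, n, -m, neg_ne_zero.2 hm, ?_⟩
    rw [FreeGroup.toWord_inv, zpow_neg, FreeGroup.toWord_inv]
    exact invRev_infix hinf
  · rw [← hprod]
    exact (List.prod_inv_reverse l).symm

theorem toWord_length_mul_le (u v : F) :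
    (u * v).toWord.length ≤ u.toWord.length + v.toWord.length := by
  have := (FreeGroup.toWord_mul_sublist u v).length_le
  simpa using this

theorem toWord_length_pow_le (g : F) (N : ℕ) :
    (g ^ N).toWord.length ≤ N * g.toWord.length := by
  induction N with
  | zero => simp [FreeGroup.toWord_one]
  | succ N ihN =>
    rw [pow_succ]
    calc (g ^ N * g).toWord.length ≤ (g ^ N).toWord.length + g.toWord.length :=
      toWord_length_mul_le _ _
    _ ≤ N * g.toWord.length + g.toWord.length := by omega
    _ = (N + 1) * g.toWord.length := by ring

theorem toWord_length_zpow_le (g : F) (N : ℤ) :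
    (g ^ N).toWord.length ≤ N.natAbs * g.toWord.length := by
  rcases le_or_gt 0 N with hN | hN
  · obtain ⟨M, rfl⟩ : ∃ M : ℕ, N = (M : ℤ) := ⟨N.toNat, by omega⟩
    rw [zpow_natCast]
    simpa using toWord_length_pow_le g M
  · obtain ⟨M, rfl⟩ : ∃ M : ℕ, N = -(M : ℤ) := ⟨N.natAbs, by omega⟩
    rw [zpow_neg, zpow_natCast, FreeGroup.toWord_inv, FreeGroup.invRev_length]
    simpa using toWord_length_pow_le g M


/-- Every nontrivial element of `H` acts loxodromically on `Y`:
the map `n ↦ g^n` is a quasi-isometric embedding of `ℤ` into `(F, d_Y)`. -/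
theorem stmt2 (V : VSeq) :
    ∀ g : F, g ∈ H → g ≠ 1 →
      ∃ lam c : ℝ, 1 ≤ lam ∧ 0 ≤ c ∧
        ∀ m n : ℤ,
          |(m : ℝ) - (n : ℝ)| / lam - c ≤ (V.dY (g ^ m) (g ^ n) : ℝ) ∧
          (V.dY (g ^ m) (g ^ n) : ℝ) ≤ lam * |(m : ℝ) - (n : ℝ)| + c := by
  intro g hgH hg1
  obtain ⟨x, h, hconj, hh1, hhcr, hlet⟩ := exists_cycRed g.toWord.length g rfl hg1
  set t : List β := List.flatten (List.replicate 7 h.toWord) with ht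
  have hune : h.toWord ≠ [] := fun hh => hh1 (FreeGroup.toWord_eq_nil_iff.1 hh)
  have hcf : ∀ p ∈ h.toWord, p.1 ≠ 2 := fun p hp => mem_H_letters hgH p (hlet p hp)
  have hT1 : 1 ≤ t.length := by
    rw [ht, length_flatten_replicate]
    have h1 : 0 < h.toWord.length := List.length_pos_iff.2 hune
    omega
  have hcntW : ∀ z : F, V.IsW z → cnt t z.toWord = 0 := by
    intro z hz
    obtain ⟨hz1, n, m, hm, hinf⟩ := hz
    rw [cnt, Finset.card_eq_zero, Finset.filter_eq_empty_iff]
    intro i _ hpre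
    exact not_infix_w_zpow V h.toWord hune hcf n m hm
      ((hpre.isInfix.trans (List.drop_suffix i z.toWord).isInfix).trans hinf)
  set Cx : ℕ := cnt t (x⁻¹).toWord + cnt t x.toWord + 2 * t.length + 6 with hCx
  have key : ∀ N : ℕ, N ≤ V.normY (g ^ N) * t.length + Cx := by
    intro N
    have h1 : h ^ N = x⁻¹ * g ^ N * x := by
      rw [hconj, conj_pow]
      group
    have h2 : cnt t ((h ^ N).toWord) ≤
        cnt t (x⁻¹).toWord + cnt t ((g ^ N).toWord) + cnt t x.toWord + 2 * t.length := by
      rw [h1]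
      have ha1 := cnt_mul_le t (x⁻¹ * g ^ N) x
      have ha2 := cnt_mul_le t x⁻¹ (g ^ N)
      omega
    have h3 := le_cnt_pow hhcr hh1 N
    rw [← ht] at h3
    have h4 : cnt t ((g ^ N).toWord) ≤ V.normY (g ^ N) * t.length := by
      obtain ⟨l, hlen, hW, hprod⟩ := normY_spec V (g ^ N)
      calc cnt t ((g ^ N).toWord) = cnt t (l.prod.toWord) := by rw [hprod]
      _ ≤ l.length * t.length := cnt_prod_le t l (fun z hz => hcntW z (hW z hz))
      _ = V.normY (g ^ N) * t.length := by rw [hlen]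
    omega
  have zkey : ∀ N : ℤ, (N.natAbs : ℕ) ≤ V.normY (g ^ N) * t.length + Cx := by
    intro N
    rcases le_or_gt 0 N with hN | hN
    · obtain ⟨M, rfl⟩ : ∃ M : ℕ, N = (M : ℤ) := ⟨N.toNat, by omega⟩
      rw [zpow_natCast]
      simpa using key M
    · obtain ⟨M, rfl⟩ : ∃ M : ℕ, N = -(M : ℤ) := ⟨N.natAbs, by omega⟩
      have h5 : (g ^ (-(M : ℤ)))⁻¹ = g ^ ((M : ℕ) : ℤ) := by rw [← zpow_neg, neg_neg]
      have h6 := normY_inv_le V (g ^ (-(M : ℤ)))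
      rw [h5, zpow_natCast] at h6
      have h7 := key M
      have hnat : ((-(M : ℤ)).natAbs) = M := by simp
      rw [hnat]
      have hmono : V.normY (g ^ M) * t.length ≤ V.normY (g ^ (-(M : ℤ))) * t.length :=
        Nat.mul_le_mul_right _ h6
      omega
  set lam : ℝ := max (max ((g.toWord.length : ℕ) : ℝ) ((t.length : ℕ) : ℝ)) 1 with hlam
  have hlampos : (0 : ℝ) < lam := lt_of_lt_of_le one_pos (le_max_right _ _)
  have hTlam : ((t.length : ℕ) : ℝ) ≤ lam := le_trans (le_max_right _ _) (le_max_left _ _)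
  have hglam : ((g.toWord.length : ℕ) : ℝ) ≤ lam := le_trans (le_max_left _ _) (le_max_left _ _)
  refine ⟨lam, (Cx : ℝ), le_max_right _ _, by positivity, ?_⟩
  intro m n
  set N : ℤ := n - m with hNdef
  have habs : ((N.natAbs : ℕ) : ℝ) = |(m : ℝ) - (n : ℝ)| := by
    rw [Nat.cast_natAbs, hNdef]
    push_cast
    rw [abs_sub_comm]
  have hdY : V.dY (g ^ m) (g ^ n) = V.normY (g ^ N) := by
    simp only [VSeq.dY]
    rw [← zpow_neg, ← zpow_add, show -m + n = N by rw [hNdef]; ring]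
  constructor
  · rw [hdY, ← habs]
    have hk' : ((N.natAbs : ℕ) : ℝ) ≤ (V.normY (g ^ N) : ℝ) * ((t.length : ℕ) : ℝ) + (Cx : ℝ) := by
      exact_mod_cast zkey N
    have h7 : ((N.natAbs : ℕ) : ℝ) ≤ ((V.normY (g ^ N) : ℝ) + (Cx : ℝ)) * lam := by
      have h8 : (V.normY (g ^ N) : ℝ) * ((t.length : ℕ) : ℝ) ≤ (V.normY (g ^ N) : ℝ) * lam :=
        mul_le_mul_of_nonneg_left hTlam (by positivity)
      have h9 : (Cx : ℝ) ≤ (Cx : ℝ) * lam :=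
        le_mul_of_one_le_right (by positivity) (le_max_right _ _)
      nlinarith
    have h10 := (div_le_iff₀ hlampos).2 h7
    linarith
  · rw [hdY, ← habs]
    have hup : (V.normY (g ^ N) : ℝ) ≤ ((N.natAbs : ℕ) : ℝ) * ((g.toWord.length : ℕ) : ℝ) := by
      have b1 := normY_le_length V (g ^ N)
      have b2 := toWord_length_zpow_le g N
      exact_mod_cast le_trans b1 b2
    calc (V.normY (g ^ N) : ℝ) ≤ ((N.natAbs : ℕ) : ℝ) * ((g.toWord.length : ℕ) : ℝ) := hup
    _ ≤ ((N.natAbs : ℕ) : ℝ) * lam := mul_le_mul_of_nonneg_left hglam (by positivity)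
    _ = lam * ((N.natAbs : ℕ) : ℝ) := by ring
    _ ≤ lam * ((N.natAbs : ℕ) : ℝ) + (Cx : ℝ) := le_add_of_nonneg_right (by positivity)

end PurelyLox
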